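/- Lower bound of singular-subspace residuals by the sin-Θ distance. Let X ∈ ℝ^{m×n} and let U ∈ ℝ^{m×r} satisfy UᵀU = I_r and U Uᵀ X = X (so the column space of X is contained in that of U). Suppose λ ≥ 0 satisfies ‖Xᵀ U w‖_2 ≥ λ ‖w‖_2 for every w ∈ ℝ^r (i.e. the r-th largest singular value of X is at least λ). Then for every Û ∈ ℝ^{m×r} with ÛᵀÛ = I_r and every Û_⊥ ∈ ℝ^{m×(m−r)} with Û_⊥ᵀÛ_⊥ = I_{m−r} and ÛᵀÛ_⊥ = 0, one has ‖Û_⊥ᵀ X‖ ≥ λ ‖Û_⊥ᵀ U‖ and ‖Û_⊥ᵀ X‖_F ≥ λ ‖Û_⊥ᵀ U‖_F. (Here ‖Û_⊥ᵀ U‖ and ‖Û_⊥ᵀ U‖_F are the spectral and Frobenius sin-Θ distances between the column spaces of Û and U.) -/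
import Mathlib


open Matrix BigOperators

noncomputable section

/-- Euclidean norm of a vector. -/
def vnorm {ι : Type*} [Fintype ι] (v : ι → ℝ) : ℝ := Real.sqrt (∑ i, v i ^ 2)

/-- Spectral norm (ℓ₂→ℓ₂ operator norm) of a matrix. -/
def specNorm {ι κ : Type*} [Fintype ι] [Fintype κ] (A : Matrix ι κ ℝ) : ℝ :=
  sSup {x | ∃ v : κ → ℝ, vnorm v ≤ 1 ∧ x = vnorm (A.mulVec v)}

/-- Squared Frobenius norm of a matrix. -/
def mfrobSq {ι κ : Type*} [Fintype ι] [Fintype κ] (A : Matrix ι κ ℝ) : ℝ :=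
  ∑ i, ∑ j, A i j ^ 2

/-- Frobenius norm of a matrix. -/
def mfrob {ι κ : Type*} [Fintype ι] [Fintype κ] (A : Matrix ι κ ℝ) : ℝ :=
  Real.sqrt (mfrobSq A)

variable {ι κ μ : Type*} [Fintype ι] [Fintype κ] [Fintype μ]

lemma vnorm_nonneg (v : ι → ℝ) : 0 ≤ vnorm v := Real.sqrt_nonneg _

lemma vnorm_sq (v : ι → ℝ) : vnorm v ^ 2 = ∑ i, v i ^ 2 :=
  Real.sq_sqrt (Finset.sum_nonneg fun i _ => sq_nonneg _)

lemma vnorm_zero : vnorm (0 : ι → ℝ) = 0 := by simp [vnorm]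

lemma vnorm_eq_zero {v : ι → ℝ} (h : vnorm v = 0) : v = 0 := by
  have h2 : ∑ i, v i ^ 2 = 0 := by
    have := vnorm_sq v; rw [h] at this; simpa using this.symm
  funext i
  have := (Finset.sum_eq_zero_iff_of_nonneg (fun i _ => sq_nonneg (v i))).1 h2 i (Finset.mem_univ i)
  exact pow_eq_zero_iff (n := 2) (by norm_num) |>.1 this

lemma vnorm_smul (c : ℝ) (v : ι → ℝ) : vnorm (c • v) = |c| * vnorm v := by
  unfold vnorm
  rw [← Real.sqrt_sq_eq_abs, ← Real.sqrt_mul (sq_nonneg c), Finset.mul_sum]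
  congr 1
  refine Finset.sum_congr rfl fun i _ => ?_
  simp [mul_pow]

lemma dot_le_vnorm_mul_vnorm (v w : ι → ℝ) : v ⬝ᵥ w ≤ vnorm v * vnorm w := by
  have h := Finset.sum_mul_sq_le_sq_mul_sq Finset.univ v w
  calc v ⬝ᵥ w ≤ |∑ i, v i * w i| := le_abs_self _
    _ = Real.sqrt ((∑ i, v i * w i) ^ 2) := (Real.sqrt_sq_eq_abs _).symm
    _ ≤ Real.sqrt ((∑ i, v i ^ 2) * ∑ i, w i ^ 2) := Real.sqrt_le_sqrt h
    _ = vnorm v * vnorm w := Real.sqrt_mul (Finset.sum_nonneg fun i _ => sq_nonneg _) _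

lemma vnorm_mulVec_le_mfrob (A : Matrix ι κ ℝ) (v : κ → ℝ) :
    vnorm (A.mulVec v) ≤ mfrob A * vnorm v := by
  have h : vnorm (A.mulVec v) ^ 2 ≤ mfrobSq A * (vnorm v) ^ 2 := by
    rw [vnorm_sq, vnorm_sq, mfrobSq, Finset.sum_mul]
    refine Finset.sum_le_sum fun i _ => ?_
    exact Finset.sum_mul_sq_le_sq_mul_sq Finset.univ (A i) v
  have hfs : (0:ℝ) ≤ mfrobSq A :=
    Finset.sum_nonneg fun i _ => Finset.sum_nonneg fun j _ => sq_nonneg _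
  have h' : ∑ i, (A.mulVec v) i ^ 2 ≤ mfrobSq A * (vnorm v) ^ 2 := by
    rw [← vnorm_sq]; exact h
  calc vnorm (A.mulVec v) = Real.sqrt (∑ i, (A.mulVec v) i ^ 2) := rfl
    _ ≤ Real.sqrt (mfrobSq A * (vnorm v) ^ 2) := Real.sqrt_le_sqrt h'
    _ = mfrob A * Real.sqrt ((vnorm v) ^ 2) := by rw [Real.sqrt_mul hfs]; rfl
    _ = mfrob A * vnorm v := by rw [Real.sqrt_sq (vnorm_nonneg v)]

lemma specNorm_bddAbove (A : Matrix ι κ ℝ) :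
    BddAbove {x | ∃ v : κ → ℝ, vnorm v ≤ 1 ∧ x = vnorm (A.mulVec v)} := by
  refine ⟨mfrob A, fun x hx => ?_⟩
  obtain ⟨v, hv, rfl⟩ := hx
  calc vnorm (A.mulVec v) ≤ mfrob A * vnorm v := vnorm_mulVec_le_mfrob A v
    _ ≤ mfrob A * 1 := by
        exact mul_le_mul_of_nonneg_left hv (Real.sqrt_nonneg _)
    _ = mfrob A := mul_one _

lemma le_specNorm (A : Matrix ι κ ℝ) {v : κ → ℝ} (hv : vnorm v ≤ 1) :
    vnorm (A.mulVec v) ≤ specNorm A :=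
  le_csSup (specNorm_bddAbove A) ⟨v, hv, rfl⟩

lemma specNorm_nonneg (A : Matrix ι κ ℝ) : 0 ≤ specNorm A := by
  have : vnorm (A.mulVec 0) ≤ specNorm A := le_specNorm A (by simp [vnorm_zero])
  calc (0:ℝ) = vnorm (A.mulVec 0) := by simp [Matrix.mulVec_zero, vnorm_zero]
    _ ≤ specNorm A := this

lemma specNorm_le (A : Matrix ι κ ℝ) {c : ℝ}
    (h : ∀ v : κ → ℝ, vnorm v ≤ 1 → vnorm (A.mulVec v) ≤ c) : specNorm A ≤ c := by
  refine csSup_le ⟨0, 0, by simp [vnorm_zero], by simp [Matrix.mulVec_zero, vnorm_zero]⟩ ?_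
  rintro x ⟨v, hv, rfl⟩; exact h v hv

lemma vnorm_mulVec_le (A : Matrix ι κ ℝ) (v : κ → ℝ) :
    vnorm (A.mulVec v) ≤ specNorm A * vnorm v := by
  rcases eq_or_ne (vnorm v) 0 with h | h
  · rw [vnorm_eq_zero h]; simp [Matrix.mulVec_zero, vnorm_zero, h]
  · have hpos : 0 < vnorm v := (vnorm_nonneg v).lt_of_ne' h
    set u := (vnorm v)⁻¹ • v with hu
    have hun : vnorm u = 1 := by
      rw [hu, vnorm_smul, abs_of_pos (inv_pos.2 hpos), inv_mul_cancel₀ h]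
    have hv' : v = (vnorm v) • u := by
      rw [hu, smul_smul, mul_inv_cancel₀ h, one_smul]
    calc vnorm (A.mulVec v) = vnorm (A.mulVec ((vnorm v) • u)) := by rw [← hv']
      _ = vnorm ((vnorm v) • A.mulVec u) := by rw [Matrix.mulVec_smul]
      _ = vnorm v * vnorm (A.mulVec u) := by
          rw [vnorm_smul, abs_of_pos hpos]
      _ ≤ vnorm v * specNorm A := by
          exact mul_le_mul_of_nonneg_left (le_specNorm A hun.le) hpos.le
      _ = specNorm A * vnorm v := mul_comm _ _

lemma specNorm_transpose_le (A : Matrix ι κ ℝ) : specNorm Aᵀ ≤ specNorm A := by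
  refine specNorm_le Aᵀ fun u hu => ?_
  set a := Aᵀ.mulVec u with ha
  set t := vnorm a with ht
  have key : t ^ 2 ≤ specNorm A * t := by
    have h1 : t ^ 2 = a ⬝ᵥ a := by
      rw [ht, vnorm_sq]; simp [dotProduct, sq]
    have h2 : a ⬝ᵥ a = (A.mulVec a) ⬝ᵥ u := by
      conv_lhs => rw [ha, Matrix.dotProduct_mulVec, Matrix.vecMul_transpose]
    have h3 : (A.mulVec a) ⬝ᵥ u ≤ vnorm (A.mulVec a) * vnorm u :=
      dot_le_vnorm_mul_vnorm _ _
    have h4 : vnorm (A.mulVec a) ≤ specNorm A * t := vnorm_mulVec_le A a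
    calc t ^ 2 = (A.mulVec a) ⬝ᵥ u := by rw [h1, h2]
      _ ≤ vnorm (A.mulVec a) * vnorm u := h3
      _ ≤ (specNorm A * t) * 1 := by
          refine mul_le_mul h4 hu (vnorm_nonneg _) ?_
          exact mul_nonneg (specNorm_nonneg A) (vnorm_nonneg a)
      _ = specNorm A * t := mul_one _
  rcases eq_or_lt_of_le (vnorm_nonneg a) with h | h
  · show vnorm a ≤ specNorm A
    rw [← h]; exact specNorm_nonneg A
  · have := key
    rw [sq] at this
    exact le_of_mul_le_mul_right (by linarith [this]) h

lemma specNorm_transpose (A : Matrix ι κ ℝ) : specNorm Aᵀ = specNorm A :=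
  le_antisymm (specNorm_transpose_le A) (by
    have := specNorm_transpose_le Aᵀ
    rwa [Matrix.transpose_transpose] at this)

/-- Lower bound of singular-subspace residuals by the sin-Θ distance
(second part of Lemma 2 of Zhang–Han, 2018):
`‖Û_⊥ᵀ X‖ ≥ σ_r(X) ‖sin Θ(Û,U)‖` in both the spectral and Frobenius norms. -/
theorem residual_lower_bound_sin_theta
    (m n r : ℕ) (X : Matrix (Fin m) (Fin n) ℝ) (U : Matrix (Fin m) (Fin r) ℝ)
    (hU : Uᵀ * U = 1) (hUX : U * Uᵀ * X = X)
    (lam : ℝ) (hlam : 0 ≤ lam)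
    (hsv : ∀ w : Fin r → ℝ, lam * vnorm w ≤ vnorm (Xᵀ.mulVec (U.mulVec w)))
    (Uhat : Matrix (Fin m) (Fin r) ℝ) (Uhatperp : Matrix (Fin m) (Fin (m - r)) ℝ)
    (hUhat : Uhatᵀ * Uhat = 1) (hUhatperp : Uhatperpᵀ * Uhatperp = 1)
    (hUhato : Uhatᵀ * Uhatperp = 0) :
    lam * specNorm (Uhatperpᵀ * U) ≤ specNorm (Uhatperpᵀ * X) ∧
    lam * mfrob (Uhatperpᵀ * U) ≤ mfrob (Uhatperpᵀ * X) := by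
  -- shared facts
  have hfact : (Uhatperpᵀ * U) * (Uᵀ * X) = Uhatperpᵀ * X := by
    rw [Matrix.mul_assoc, ← Matrix.mul_assoc U Uᵀ X, hUX]
  constructor
  · -- spectral part
    rcases eq_or_lt_of_le hlam with h0 | hpos
    · rw [← h0, zero_mul]; exact specNorm_nonneg _
    · have hXfact : (Xᵀ * U) * (Uᵀ * Uhatperp) = Xᵀ * Uhatperp := by
        have hXT : Xᵀ * (U * Uᵀ) = Xᵀ := by
          have := congrArg Matrix.transpose hUX
          rw [Matrix.transpose_mul, Matrix.transpose_mul, Matrix.transpose_transpose,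
            ← Matrix.mul_assoc] at this
          rwa [Matrix.mul_assoc] at this
        rw [Matrix.mul_assoc, ← Matrix.mul_assoc U Uᵀ Uhatperp, ← Matrix.mul_assoc, hXT]
      have key : ∀ z : Fin (m - r) → ℝ, vnorm z ≤ 1 →
          vnorm ((Uᵀ * Uhatperp).mulVec z) ≤ specNorm (Xᵀ * Uhatperp) / lam := by
        intro z hz
        rw [le_div_iff₀ hpos]
        have h1 := hsv ((Uᵀ * Uhatperp).mulVec z)
        have h2 : Xᵀ.mulVec (U.mulVec ((Uᵀ * Uhatperp).mulVec z)) =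
            (Xᵀ * Uhatperp).mulVec z := by
          rw [Matrix.mulVec_mulVec, Matrix.mulVec_mulVec, hXfact]
        rw [h2] at h1
        calc vnorm ((Uᵀ * Uhatperp).mulVec z) * lam
            = lam * vnorm ((Uᵀ * Uhatperp).mulVec z) := mul_comm _ _
          _ ≤ vnorm ((Xᵀ * Uhatperp).mulVec z) := h1
          _ ≤ specNorm (Xᵀ * Uhatperp) := le_specNorm _ hz
      have h3 : specNorm (Uᵀ * Uhatperp) ≤ specNorm (Xᵀ * Uhatperp) / lam :=
        specNorm_le _ key
      have h4 : lam * specNorm (Uᵀ * Uhatperp) ≤ specNorm (Xᵀ * Uhatperp) := by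
        rw [mul_comm, ← le_div_iff₀ hpos]; exact h3
      have e1 : specNorm (Uhatperpᵀ * U) = specNorm (Uᵀ * Uhatperp) := by
        rw [← specNorm_transpose (Uhatperpᵀ * U), Matrix.transpose_mul,
          Matrix.transpose_transpose]
      have e2 : specNorm (Uhatperpᵀ * X) = specNorm (Xᵀ * Uhatperp) := by
        rw [← specNorm_transpose (Uhatperpᵀ * X), Matrix.transpose_mul,
          Matrix.transpose_transpose]
      rw [e1, e2]; exact h4
  · -- Frobenius part
    have key : ∀ i, lam ^ 2 * (∑ k, (Uhatperpᵀ * U) i k ^ 2) ≤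
        ∑ j, (Uhatperpᵀ * X) i j ^ 2 := by
      intro i
      have hrow : (fun j => (Uhatperpᵀ * X) i j) =
          Xᵀ.mulVec (U.mulVec ((Uhatperpᵀ * U) i)) := by
        funext j
        rw [Matrix.mulVec_mulVec, ← hfact]
        simp [Matrix.mul_apply, Matrix.mulVec, dotProduct,
          Matrix.transpose_apply, mul_comm]
      have h1 := hsv ((Uhatperpᵀ * U) i)
      have h2 : (lam * vnorm ((Uhatperpᵀ * U) i)) ^ 2 ≤
          vnorm (Xᵀ.mulVec (U.mulVec ((Uhatperpᵀ * U) i))) ^ 2 := by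
        apply pow_le_pow_left₀ (mul_nonneg hlam (vnorm_nonneg _)) h1
      rw [mul_pow, vnorm_sq, vnorm_sq] at h2
      calc lam ^ 2 * (∑ k, (Uhatperpᵀ * U) i k ^ 2)
          ≤ ∑ j, (Xᵀ.mulVec (U.mulVec ((Uhatperpᵀ * U) i))) j ^ 2 := h2
        _ = ∑ j, (Uhatperpᵀ * X) i j ^ 2 := by rw [← hrow]
    have hsum : lam ^ 2 * mfrobSq (Uhatperpᵀ * U) ≤ mfrobSq (Uhatperpᵀ * X) := by
      rw [mfrobSq, mfrobSq, Finset.mul_sum]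
      exact Finset.sum_le_sum fun i _ => key i
    have hnn : (0:ℝ) ≤ mfrobSq (Uhatperpᵀ * U) :=
      Finset.sum_nonneg fun i _ => Finset.sum_nonneg fun j _ => sq_nonneg _
    calc lam * mfrob (Uhatperpᵀ * U)
        = Real.sqrt (lam ^ 2) * Real.sqrt (mfrobSq (Uhatperpᵀ * U)) := by
          rw [Real.sqrt_sq hlam]; rfl
      _ = Real.sqrt (lam ^ 2 * mfrobSq (Uhatperpᵀ * U)) :=
          (Real.sqrt_mul (sq_nonneg _) _).symm
      _ ≤ Real.sqrt (mfrobSq (Uhatperpᵀ * X)) := Real.sqrt_le_sqrt hsum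
      _ = mfrob (Uhatperpᵀ * X) := rfl

end
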